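/- There exist constants c > 0 and C > 0 such that the following holds for every prime power q. Let G = SL(2,q), let D be a probability distribution on G, and let U be the uniform distribution on G. Suppose the distribution of the trace Tr(x) of a sample x from D is ε-close in statistical distance to the uniform distribution on F_q. Then the distribution of the conjugacy class of a sample from D is (Cε + C/q)-close in statistical distance to the distribution of the conjugacy class of a sample from U. -/

import Mathlib

open Matrix Finset

open Finset

variable {F : Type} [Field F] [Fintype F] [DecidableEq F]

open scoped Classical

set_option linter.unusedSectionVars false
set_option maxHeartbeats 1000000

local notation "SL2" => Matrix.SpecialLinearGroup (Fin 2) F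

lemma aux_exists_nonsquare_value (t : F) (hroot : ∀ x : F, x*x - t*x + 1 ≠ 0)
    {c : F} (hc : ¬ IsSquare c) : ∃ x : F, ¬ IsSquare (x*x - t*x + 1) := by
  by_contra h
  push_neg at h
  have hchar : ringChar F ≠ 2 := fun h2 => hc (FiniteField.isSquare_of_char_two h2 c)
  have h2 : (2 : F) ≠ 0 := Ring.two_ne_zero hchar
  set S : Finset F := univ.filter (fun s : F => s ≠ 0 ∧ IsSquare s) with hS
  have claim1 : Fintype.card F ≤ 2 * S.card := by
    have := Finset.card_le_mul_card_image_of_maps_to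
      (f := fun x : F => x*x - t*x + 1) (s := univ) (t := S)
      (fun a _ => by simp [hS, hroot a, h a]) 2 ?_
    · simpa using this
    · intro b _
      by_cases hne : (univ.filter (fun a : F => a*a - t*a + 1 = b)).Nonempty
      · obtain ⟨x0, hx0⟩ := hne
        simp only [mem_filter, mem_univ, true_and] at hx0
        have hsub : (univ.filter (fun a : F => a*a - t*a + 1 = b)) ⊆ {x0, t - x0} := by
          intro x hx
          simp only [mem_filter, mem_univ, true_and] at hx
          have : (x - x0) * (x + x0 - t) = 0 := by linear_combination hx - hx0
          rcases mul_eq_zero.mp this with h' | h'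
          · simp [sub_eq_zero.mp h']
          · have : x = t - x0 := by linear_combination h'
            simp [this]
        calc (univ.filter (fun a : F => a*a - t*a + 1 = b)).card
            ≤ ({x0, t - x0} : Finset F).card := Finset.card_le_card hsub
          _ ≤ 2 := (Finset.card_insert_le _ _).trans (by simp)
      · rw [Finset.not_nonempty_iff_eq_empty] at hne
        simp [hne]
  have claim2 : 2 * S.card ≤ Fintype.card F - 1 := by
    have himg : S ⊆ (univ \ {0} : Finset F).image (fun y : F => y * y) := by
      intro s hs
      simp only [hS, mem_filter, mem_univ, true_and] at hs
      obtain ⟨hs0, y, hy⟩ := hs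
      refine Finset.mem_image.mpr ⟨y, ?_, hy.symm⟩
      simp only [Finset.mem_sdiff, mem_univ, Finset.mem_singleton, true_and]
      rintro rfl; exact hs0 (by simp [hy])
    have hmul := Finset.mul_card_image_le_card (f := fun y : F => y * y)
      (univ \ {0} : Finset F) 2 ?_
    · have hcard : (univ \ {0} : Finset F).card = Fintype.card F - 1 := by
        rw [Finset.card_sdiff_of_subset (by simp)]; simp
      calc 2 * S.card ≤ 2 * ((univ \ {0} : Finset F).image (fun y : F => y * y)).card :=
            Nat.mul_le_mul_left 2 (Finset.card_le_card himg)
        _ ≤ (univ \ {0} : Finset F).card := hmul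
        _ = Fintype.card F - 1 := hcard
    · intro b hb
      obtain ⟨y, hy, hyb⟩ := Finset.mem_image.mp hb
      simp only [Finset.mem_sdiff, mem_univ, Finset.mem_singleton, true_and] at hy
      have hyne : y ≠ -y := by
        intro h'
        apply hy
        have h2y : 2 * y = 0 := by linear_combination h'
        rcases mul_eq_zero.mp h2y with h'' | h''
        · exact absurd h'' h2
        · exact h''
      have hsub : ({y, -y} : Finset F) ⊆ (univ \ {0}).filter (fun a : F => a * a = b) := by
        intro x hx
        simp only [Finset.mem_insert, Finset.mem_singleton] at hx
        have hyne0 : (-y : F) ≠ 0 := neg_ne_zero.mpr hy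
        rcases hx with rfl | rfl
        · simp only [Finset.mem_filter, Finset.mem_sdiff, mem_univ, Finset.mem_singleton,
            true_and]
          exact ⟨hy, hyb⟩
        · simp only [Finset.mem_filter, Finset.mem_sdiff, mem_univ, Finset.mem_singleton,
            true_and]
          exact ⟨hyne0, by rw [neg_mul_neg]; exact hyb⟩
      calc 2 = ({y, -y} : Finset F).card := by
            rw [Finset.card_insert_of_notMem (by simpa using hyne), Finset.card_singleton]
        _ ≤ _ := Finset.card_le_card hsub
  have hq : 1 ≤ Fintype.card F := Fintype.card_pos
  omega

lemma aux_represents {t : F} (ht : t*t - 4 ≠ 0) {c : F} (hc : c ≠ 0) :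
    ∃ x y : F, x*x - t*x*y + y*y = c := by
  by_cases hroot : ∃ r : F, r*r - t*r + 1 = 0
  · obtain ⟨r, hr⟩ := hroot
    have hr0 : r ≠ 0 := by rintro rfl; simp at hr
    have hr1 : (1 : F) - r*r ≠ 0 := by
      intro h
      apply ht
      have hr2 : r * r = 1 := by linear_combination -h
      have h2 : t * r = 2 := by linear_combination hr2 - hr
      calc t*t - 4 = t*t*(r*r) - 4 := by rw [hr2]; ring
        _ = (t*r)*(t*r) - 4 := by ring
        _ = 2*2 - 4 := by rw [h2]
        _ = 0 := by ring
    set y : F := (c - 1)*r/(1 - r*r) with hy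
    set x : F := c + r*y with hx
    have h1 : x - r*y = c := by rw [hx]; ring
    have h2 : r*x - y = r := by
      rw [hx, hy, div_eq_mul_inv]
      have hi := mul_inv_cancel₀ hr1
      linear_combination (-(r*(c-1)))*hi
    refine ⟨x, y, ?_⟩
    have key : r * (x*x - t*x*y + y*y) = r * c := by
      linear_combination (r*x - y) * h1 + c * h2 + (x*y) * hr
    exact mul_left_cancel₀ hr0 key
  · push_neg at hroot
    by_cases hsq : IsSquare c
    · obtain ⟨s, hs⟩ := hsq
      exact ⟨s, 0, by rw [hs]; ring⟩
    · obtain ⟨x0, hx0⟩ := aux_exists_nonsquare_value t hroot hsq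
      have hd0 : x0*x0 - t*x0 + 1 ≠ 0 := hroot x0
      have hcd : IsSquare (c * (x0*x0 - t*x0 + 1)) := by
        have h1 : quadraticChar F c = -1 := quadraticChar_neg_one_iff_not_isSquare.mpr hsq
        have h2 : quadraticChar F (x0*x0 - t*x0 + 1) = -1 :=
          quadraticChar_neg_one_iff_not_isSquare.mpr hx0
        have h3 : quadraticChar F (c * (x0*x0 - t*x0 + 1)) = 1 := by
          rw [_root_.map_mul, h1, h2]; ring
        exact (quadraticChar_one_iff_isSquare (mul_ne_zero hc hd0)).mp h3
      obtain ⟨e, he⟩ := hcd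
      set d : F := x0*x0 - t*x0 + 1 with hd
      refine ⟨(e/d)*x0, e/d, ?_⟩
      have step : (e/d)*x0 * ((e/d)*x0) - t*((e/d)*x0)*(e/d) + (e/d)*(e/d)
          = (e*e)/(d*d) * d := by
        field_simp
        ring
      rw [step, ← he]
      field_simp





-- conjugation criterion
lemma aux_conj_iff (u g h : SL2) :
    u⁻¹ * g * u = h ↔ (g : Matrix (Fin 2) (Fin 2) F) * u = u * h := by
  constructor
  · intro H
    have h1 : g * u = u * h := by rw [← H]; group
    calc (g : Matrix (Fin 2) (Fin 2) F) * u = ((g * u : SL2) : Matrix (Fin 2) (Fin 2) F) := by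
          push_cast; rfl
      _ = ((u * h : SL2) : Matrix (Fin 2) (Fin 2) F) := by rw [h1]
      _ = (u : Matrix (Fin 2) (Fin 2) F) * h := by push_cast; rfl
  · intro H
    have h1 : g * u = u * h := Subtype.ext (by push_cast; exact H)
    calc u⁻¹ * g * u = u⁻¹ * (g * u) := by group
      _ = u⁻¹ * (u * h) := by rw [h1]
      _ = h := by group

def Nmat (t lam : F) (h : lam ≠ 0) : SL2 :=
  ⟨!![0, -lam⁻¹; lam, t], by rw [Matrix.det_fin_two_of]; simp [h]⟩

lemma aux_conj_to_N (t : F) (g : SL2) (htr : Matrix.trace (g : Matrix (Fin 2) (Fin 2) F) = t)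
    (v0 v1 : F) {δ : F}
    (hδval : (g 1 0)*v0*v0 + ((g 1 1) - (g 0 0))*v0*v1 - (g 0 1)*v1*v1 = δ)
    (hδ : δ ≠ 0) :
    ∃ u : SL2, u⁻¹ * g * u = Nmat t δ hδ := by
  set a := g 0 0 with ha
  set b := g 0 1 with hb
  set c := g 1 0 with hc
  set d := g 1 1 with hd
  have hdet : a*d - b*c = 1 := by
    have := g.2
    rw [Matrix.det_fin_two] at this
    exact this
  have htr' : a + d = t := by
    rw [Matrix.trace_fin_two] at htr
    exact htr
  have hPdet : Matrix.det !![v0, (a*v0+b*v1)/δ; v1, (c*v0+d*v1)/δ] = 1 := by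
    rw [Matrix.det_fin_two_of]
    field_simp
    linear_combination hδval
  refine ⟨⟨!![v0, (a*v0+b*v1)/δ; v1, (c*v0+d*v1)/δ], hPdet⟩, ?_⟩
  apply (aux_conj_iff _ _ _).mpr
  show (g : Matrix (Fin 2) (Fin 2) F) * !![v0, (a*v0+b*v1)/δ; v1, (c*v0+d*v1)/δ]
      = !![v0, (a*v0+b*v1)/δ; v1, (c*v0+d*v1)/δ] * !![0, -δ⁻¹; δ, t]
  have hg : (g : Matrix (Fin 2) (Fin 2) F) = !![a, b; c, d] := by
    ext i j
    fin_cases i <;> fin_cases j <;> simp [ha, hb, hc, hd]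
  rw [hg]
  ext i j
  fin_cases i <;> fin_cases j <;>
    simp [Matrix.mul_apply, Fin.sum_univ_two] <;> field_simp <;> ring_nf
  · linear_combination (-v0)*hdet + (a*v0+b*v1)*htr'
  · linear_combination (-v1)*hdet + (c*v0+d*v1)*htr'

lemma aux_N_conj (t : F) {δ : F} (hδ : δ ≠ 0) (ht : t*t - 4 ≠ 0) :
    ∃ u : SL2, u⁻¹ * Nmat t δ hδ * u = Nmat t 1 one_ne_zero := by
  obtain ⟨x, y, hxy⟩ := aux_represents ht (inv_ne_zero hδ)
  have hu2det : Matrix.det !![x, y; -δ*y, δ*x - δ*t*y] = 1 := by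
    rw [Matrix.det_fin_two_of]
    have h2 : x * (δ*x - δ*t*y) - y * (-δ*y) = δ * (x*x - t*x*y + y*y) := by ring
    rw [h2, hxy]
    field_simp
  refine ⟨⟨!![x, y; -δ*y, δ*x - δ*t*y], hu2det⟩, ?_⟩
  apply (aux_conj_iff _ _ _).mpr
  show (!![0, -δ⁻¹; δ, t] : Matrix (Fin 2) (Fin 2) F) * !![x, y; -δ*y, δ*x - δ*t*y]
      = !![x, y; -δ*y, δ*x - δ*t*y] * !![0, -(1:F)⁻¹; 1, t]
  ext i j
  fin_cases i <;> fin_cases j <;>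
    simp [Matrix.mul_apply, Fin.sum_univ_two] <;> (try field_simp) <;> (try ring_nf)

lemma aux_conj_to_companion (t : F) (ht : t*t - 4 ≠ 0) (g : SL2)
    (htr : Matrix.trace (g : Matrix (Fin 2) (Fin 2) F) = t) :
    ∃ u : SL2, u⁻¹ * g * u = Nmat t 1 one_ne_zero := by
  set a := g 0 0 with ha
  set b := g 0 1 with hb
  set c := g 1 0 with hc
  set d := g 1 1 with hd
  have hdet : a*d - b*c = 1 := by
    have := g.2; rw [Matrix.det_fin_two] at this; exact this
  have htr' : a + d = t := by rw [Matrix.trace_fin_two] at htr; exact htr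
  have hA : ∃ v0 v1 δ, (c*v0*v0 + (d - a)*v0*v1 - b*v1*v1 = δ) ∧ δ ≠ 0 := by
    by_cases hc0 : c ≠ 0
    · exact ⟨1, 0, c, by ring, hc0⟩
    by_cases hb0 : b ≠ 0
    · exact ⟨0, 1, -b, by ring, neg_ne_zero.mpr hb0⟩
    push_neg at hc0 hb0
    have hda : d - a ≠ 0 := by
      intro hda0
      apply ht
      have hd' : d = a := by linear_combination hda0
      have h1 : a * a = 1 := by linear_combination hdet - a*hd' + b*hc0
      linear_combination (-(t+a+d))*htr' + (d+3*a)*hd' + 4*h1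
    exact ⟨1, 1, d - a, by rw [hc0, hb0]; ring, hda⟩
  obtain ⟨v0, v1, δ, hδval, hδ⟩ := hA
  obtain ⟨u1, hu1⟩ := aux_conj_to_N t g htr v0 v1 hδval hδ
  obtain ⟨u2, hu2⟩ := aux_N_conj t hδ ht
  refine ⟨u1 * u2, ?_⟩
  have key : (u1 * u2)⁻¹ * g * (u1 * u2) = u2⁻¹ * (u1⁻¹ * g * u1) * u2 := by group
  rw [key, hu1, hu2]

lemma aux_conj_of_trace {t : F} (ht : t*t - 4 ≠ 0) (g h : SL2)
    (hg : Matrix.trace (g : Matrix (Fin 2) (Fin 2) F) = t)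
    (hh : Matrix.trace (h : Matrix (Fin 2) (Fin 2) F) = t) :
    ∃ u : SL2, u⁻¹ * g * u = h := by
  obtain ⟨ug, hug⟩ := aux_conj_to_companion t ht g hg
  obtain ⟨uh, huh⟩ := aux_conj_to_companion t ht h hh
  refine ⟨ug * uh⁻¹, ?_⟩
  have : h = uh * Nmat t 1 one_ne_zero * uh⁻¹ := by rw [← huh]; group
  rw [this, ← hug]
  group


lemma aux_fiber_lower (t : F) :
    Fintype.card F * (Fintype.card F - 1)
      ≤ (univ.filter (fun g : SL2 => Matrix.trace (g : Matrix (Fin 2) (Fin 2) F) = t)).card := by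
  classical
  have hdet : ∀ p : F × F, p.2 ≠ 0 →
      Matrix.det !![p.1, p.2; (p.1*(t-p.1)-1)/p.2, t-p.1] = 1 := by
    intro p hp
    rw [Matrix.det_fin_two_of]
    field_simp
    try ring
  set s : Finset (F × F) := univ ×ˢ (univ \ {0}) with hs
  have hcard : s.card = Fintype.card F * (Fintype.card F - 1) := by
    rw [hs, Finset.card_product, Finset.card_sdiff_of_subset (by simp)]
    simp
  rw [← hcard]
  apply Finset.card_le_card_of_injOn
    (fun p => if h : p.2 ≠ 0 then (⟨_, hdet p h⟩ : SL2)
      else ⟨(1 : Matrix (Fin 2) (Fin 2) F), by simp⟩)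
  · intro p hp
    have hp2 : p.2 ≠ 0 := by simpa [hs] using hp
    simp only [Finset.mem_coe, dif_pos hp2, mem_filter, mem_univ, true_and]
    refine Finset.mem_coe.mpr (Finset.mem_filter.mpr ⟨Finset.mem_univ _, ?_⟩)
    rw [Matrix.trace_fin_two]
    show p.1 + (t - p.1) = t
    ring
  · intro p hp q hq hpq
    have hp2 : p.2 ≠ 0 := by simpa [hs] using hp
    have hq2 : q.2 ≠ 0 := by simpa [hs] using hq
    simp only at hpq
    rw [dif_pos hp2, dif_pos hq2] at hpq
    have h00 := congrArg (fun g : SL2 => (g : Matrix (Fin 2) (Fin 2) F) 0 0) hpq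
    have h01 := congrArg (fun g : SL2 => (g : Matrix (Fin 2) (Fin 2) F) 0 1) hpq
    simp at h00 h01
    exact Prod.ext h00 h01

lemma aux_quad_card (t b : F) : (univ.filter (fun a : F => a*a - t*a + 1 = b)).card ≤ 2 := by
  by_cases hne : (univ.filter (fun a : F => a*a - t*a + 1 = b)).Nonempty
  · obtain ⟨x0, hx0⟩ := hne
    simp only [mem_filter, mem_univ, true_and] at hx0
    have hsub : (univ.filter (fun a : F => a*a - t*a + 1 = b)) ⊆ {x0, t - x0} := by
      intro x hx
      simp only [mem_filter, mem_univ, true_and] at hx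
      have h0 : (x - x0) * (x + x0 - t) = 0 := by linear_combination hx - hx0
      rcases mul_eq_zero.mp h0 with h' | h'
      · simp [sub_eq_zero.mp h']
      · have : x = t - x0 := by linear_combination h'
        simp [this]
    calc (univ.filter (fun a : F => a*a - t*a + 1 = b)).card
        ≤ ({x0, t - x0} : Finset F).card := Finset.card_le_card hsub
      _ ≤ 2 := (Finset.card_insert_le _ _).trans (by simp)
  · rw [Finset.not_nonempty_iff_eq_empty] at hne
    simp [hne]

lemma aux_fiber_upper (t : F) :
    (univ.filter (fun g : SL2 => Matrix.trace (g : Matrix (Fin 2) (Fin 2) F) = t)).card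
      ≤ Fintype.card F * (Fintype.card F - 1) + 2 * Fintype.card F := by
  classical
  set fib := univ.filter (fun g : SL2 => Matrix.trace (g : Matrix (Fin 2) (Fin 2) F) = t)
    with hfib
  have hsplit : (fib.filter (fun g : SL2 => (g : Matrix (Fin 2) (Fin 2) F) 0 1 ≠ 0)).card
      + (fib.filter (fun g : SL2 => ¬ ((g : Matrix (Fin 2) (Fin 2) F) 0 1 ≠ 0))).card
      = fib.card := Finset.card_filter_add_card_filter_not _
  rw [← hsplit]
  have htrdet : ∀ g : SL2, g ∈ fib →
      (g : Matrix (Fin 2) (Fin 2) F) 0 0 + (g : Matrix (Fin 2) (Fin 2) F) 1 1 = t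
      ∧ (g : Matrix (Fin 2) (Fin 2) F) 0 0 * (g : Matrix (Fin 2) (Fin 2) F) 1 1
        - (g : Matrix (Fin 2) (Fin 2) F) 0 1 * (g : Matrix (Fin 2) (Fin 2) F) 1 0 = 1 := by
    intro g hg
    constructor
    · rw [hfib] at hg
      simp only [mem_filter, mem_univ, true_and] at hg
      rw [Matrix.trace_fin_two] at hg
      exact hg
    · have := g.2
      rw [Matrix.det_fin_two] at this
      exact this
  have hext : ∀ g h : SL2, g ∈ fib → h ∈ fib →
      (g : Matrix (Fin 2) (Fin 2) F) 0 0 = (h : Matrix (Fin 2) (Fin 2) F) 0 0 →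
      (g : Matrix (Fin 2) (Fin 2) F) 0 1 = (h : Matrix (Fin 2) (Fin 2) F) 0 1 →
      (g : Matrix (Fin 2) (Fin 2) F) 1 0 = (h : Matrix (Fin 2) (Fin 2) F) 1 0 →
      g = h := by
    intro g h hg hh h00 h01 h10
    obtain ⟨hgt, _⟩ := htrdet g hg
    obtain ⟨hht, _⟩ := htrdet h hh
    apply Subtype.ext
    ext i j
    fin_cases i <;> fin_cases j
    · exact h00
    · exact h01
    · exact h10
    · show (g : Matrix (Fin 2) (Fin 2) F) 1 1 = (h : Matrix (Fin 2) (Fin 2) F) 1 1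
      linear_combination hgt - hht - h00
  have hA : (fib.filter (fun g : SL2 => (g : Matrix (Fin 2) (Fin 2) F) 0 1 ≠ 0)).card
      ≤ Fintype.card F * (Fintype.card F - 1) := by
    have : (univ ×ˢ (univ \ {0}) : Finset (F × F)).card
        = Fintype.card F * (Fintype.card F - 1) := by
      rw [Finset.card_product, Finset.card_sdiff_of_subset (by simp)]; simp
    rw [← this]
    apply Finset.card_le_card_of_injOn
      (fun g : SL2 => ((g : Matrix (Fin 2) (Fin 2) F) 0 0, (g : Matrix (Fin 2) (Fin 2) F) 0 1))
    · intro g hg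
      simp only [Finset.mem_coe, mem_filter] at hg
      simp only [Finset.mem_coe, Finset.mem_product, Finset.mem_sdiff, mem_univ, Finset.mem_singleton, true_and]
      exact hg.2
    · intro g hg h hh hpq
      simp only [Finset.mem_coe, mem_filter] at hg hh
      have h00 : (g : Matrix (Fin 2) (Fin 2) F) 0 0 = (h : Matrix (Fin 2) (Fin 2) F) 0 0 :=
        congrArg Prod.fst hpq
      have h01 : (g : Matrix (Fin 2) (Fin 2) F) 0 1 = (h : Matrix (Fin 2) (Fin 2) F) 0 1 :=
        congrArg Prod.snd hpq
      apply hext g h hg.1 hh.1 h00 h01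
      obtain ⟨hgt, hgd⟩ := htrdet g hg.1
      obtain ⟨hht, hhd⟩ := htrdet h hh.1
      have hb : (g : Matrix (Fin 2) (Fin 2) F) 0 1 ≠ 0 := hg.2
      have h11 : (g : Matrix (Fin 2) (Fin 2) F) 1 1 = (h : Matrix (Fin 2) (Fin 2) F) 1 1 := by
        linear_combination hgt - hht - h00
      have key : (g : Matrix (Fin 2) (Fin 2) F) 0 1 *
          ((g : Matrix (Fin 2) (Fin 2) F) 1 0 - (h : Matrix (Fin 2) (Fin 2) F) 1 0) = 0 := by
        linear_combination hhd - hgd + ((g : Matrix (Fin 2) (Fin 2) F) 1 1) * h00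
          + ((h : Matrix (Fin 2) (Fin 2) F) 0 0) * h11
          - ((h : Matrix (Fin 2) (Fin 2) F) 1 0) * h01
      rcases mul_eq_zero.mp key with h' | h'
      · exact absurd h' hb
      · linear_combination h'
  have hB : (fib.filter (fun g : SL2 => ¬ ((g : Matrix (Fin 2) (Fin 2) F) 0 1 ≠ 0))).card
      ≤ 2 * Fintype.card F := by
    have hcard : ((univ.filter (fun a : F => a*a - t*a + 1 = 0)) ×ˢ (univ : Finset F)).card
        ≤ 2 * Fintype.card F := by
      rw [Finset.card_product]
      exact Nat.mul_le_mul_right _ (aux_quad_card t 0)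
    refine le_trans ?_ hcard
    apply Finset.card_le_card_of_injOn
      (fun g : SL2 => ((g : Matrix (Fin 2) (Fin 2) F) 0 0, (g : Matrix (Fin 2) (Fin 2) F) 1 0))
    · intro g hg
      simp only [Finset.mem_coe, mem_filter, not_not] at hg
      obtain ⟨hgf, hb⟩ := hg
      obtain ⟨hgt, hgd⟩ := htrdet g hgf
      simp only [Finset.mem_coe, Finset.mem_product, mem_filter, mem_univ, true_and, and_true]
      linear_combination ((g : Matrix (Fin 2) (Fin 2) F) 0 0) * hgt - hgd
        - ((g : Matrix (Fin 2) (Fin 2) F) 1 0) * hb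
    · intro g hg h hh hpq
      simp only [Finset.mem_coe, mem_filter, not_not] at hg hh
      have h00 : (g : Matrix (Fin 2) (Fin 2) F) 0 0 = (h : Matrix (Fin 2) (Fin 2) F) 0 0 :=
        congrArg Prod.fst hpq
      have h10 : (g : Matrix (Fin 2) (Fin 2) F) 1 0 = (h : Matrix (Fin 2) (Fin 2) F) 1 0 :=
        congrArg Prod.snd hpq
      apply hext g h hg.1 hh.1 h00 ?_ h10
      rw [hg.2, hh.2]
  omega


lemma aux_trace_conj (u g : SL2) :
    Matrix.trace ((u⁻¹ * g * u : SL2) : Matrix (Fin 2) (Fin 2) F)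
      = Matrix.trace (g : Matrix (Fin 2) (Fin 2) F) := by
  have h1 : u⁻¹ * g * u = u⁻¹ * (g * u) := by group
  rw [h1, Matrix.SpecialLinearGroup.coe_mul, Matrix.trace_mul_comm,
    ← Matrix.SpecialLinearGroup.coe_mul]
  congr 1
  group

noncomputable def cls (g : SL2) : Finset SL2 :=
  Finset.univ.image (fun u : SL2 => u⁻¹ * g * u)

lemma aux_mem_cls_self (g : SL2) : g ∈ cls g := by
  apply Finset.mem_image.mpr
  exact ⟨1, Finset.mem_univ 1, by group⟩

lemma aux_trace_of_mem_cls {g h : SL2} (hh : h ∈ cls g) :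
    Matrix.trace ((h : SL2) : Matrix (Fin 2) (Fin 2) F)
      = Matrix.trace (g : Matrix (Fin 2) (Fin 2) F) := by
  obtain ⟨u, _, hu⟩ := Finset.mem_image.mp hh
  rw [← hu]
  exact aux_trace_conj u g

lemma aux_cls_conj (u g : SL2) : cls (u⁻¹ * g * u) = cls g := by
  unfold cls
  ext x
  simp only [Finset.mem_image, Finset.mem_univ, true_and]
  constructor
  · rintro ⟨w, hw⟩
    exact ⟨u * w, by rw [← hw]; group⟩
  · rintro ⟨w, hw⟩
    exact ⟨u⁻¹ * w, by rw [← hw]; group⟩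

lemma aux_cls_eq_iff (g h : SL2) : cls g = cls h ↔ ∃ u : SL2, u⁻¹ * g * u = h := by
  constructor
  · intro H
    have : h ∈ cls g := H ▸ aux_mem_cls_self h
    obtain ⟨u, _, hu⟩ := Finset.mem_image.mp this
    exact ⟨u, hu⟩
  · rintro ⟨u, rfl⟩
    exact (aux_cls_conj u g).symm

lemma aux_cls_fiber_eq_trace_fiber {t : F} (ht : t*t - 4 ≠ 0) (g : SL2)
    (hg : Matrix.trace (g : Matrix (Fin 2) (Fin 2) F) = t) :
    univ.filter (fun h : SL2 => cls h = cls g)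
      = univ.filter (fun h : SL2 => Matrix.trace (h : Matrix (Fin 2) (Fin 2) F) = t) := by
  ext h
  simp only [mem_filter, mem_univ, true_and]
  constructor
  · intro H
    have : h ∈ cls g := H ▸ aux_mem_cls_self h
    rw [aux_trace_of_mem_cls this, hg]
  · intro H
    rw [aux_cls_eq_iff]
    exact aux_conj_of_trace ht h g H hg

lemma aux_cls_eq_tfiber {t : F} (ht : t*t - 4 ≠ 0) (g : SL2)
    (hg : Matrix.trace (g : Matrix (Fin 2) (Fin 2) F) = t) :
    cls g = univ.filter (fun h : SL2 => Matrix.trace (h : Matrix (Fin 2) (Fin 2) F) = t) := by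
  ext h
  simp only [mem_filter, mem_univ, true_and]
  constructor
  · intro hh
    rw [aux_trace_of_mem_cls hh, hg]
  · intro hh
    obtain ⟨u, hu⟩ := aux_conj_of_trace ht g h hg hh
    exact Finset.mem_image.mpr ⟨u, Finset.mem_univ u, hu⟩

lemma aux_abs_sub_le_add {x y : ℝ} (hx : 0 ≤ x) (hy : 0 ≤ y) : |x - y| ≤ x + y := by
  rw [abs_le]; constructor <;> linarith

noncomputable def tfib (t : F) : Finset (Matrix.SpecialLinearGroup (Fin 2) F) :=
  Finset.univ.filter
    (fun g : Matrix.SpecialLinearGroup (Fin 2) F => Matrix.trace (g : Matrix (Fin 2) (Fin 2) F) = t)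

noncomputable def clsfib (S : Finset (Matrix.SpecialLinearGroup (Fin 2) F)) :
    Finset (Matrix.SpecialLinearGroup (Fin 2) F) :=
  Finset.univ.filter (fun g : Matrix.SpecialLinearGroup (Fin 2) F => cls g = S)

lemma aux_card_sum : Fintype.card SL2 = ∑ t : F, (tfib t).card := by
  rw [← Finset.card_univ,
    Finset.card_eq_sum_card_fiberwise
      (f := fun g : SL2 => Matrix.trace (g : Matrix (Fin 2) (Fin 2) F)) (t := Finset.univ)
      (fun g _ => Finset.mem_univ _)]
  rfl

lemma aux_q1 : 1 ≤ Fintype.card F := Fintype.card_pos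

lemma aux_tfib_real_lower (t : F) :
    (Fintype.card F : ℝ) * (Fintype.card F : ℝ) - (Fintype.card F : ℝ)
      ≤ ((tfib t).card : ℝ) := by
  have l := aux_fiber_lower t
  have h1 : ((Fintype.card F * (Fintype.card F - 1) : ℕ) : ℝ)
      = (Fintype.card F : ℝ) * (Fintype.card F : ℝ) - (Fintype.card F : ℝ) := by
    push_cast [Nat.cast_sub (aux_q1 (F := F))]
    ring
  rw [← h1]
  exact_mod_cast l

lemma aux_tfib_real_upper (t : F) :
    ((tfib t).card : ℝ)
      ≤ (Fintype.card F : ℝ) * (Fintype.card F : ℝ) + (Fintype.card F : ℝ) := by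
  have u := aux_fiber_upper t
  have h1 : ((Fintype.card F * (Fintype.card F - 1) + 2 * Fintype.card F : ℕ) : ℝ)
      = (Fintype.card F : ℝ) * (Fintype.card F : ℝ) + (Fintype.card F : ℝ) := by
    push_cast [Nat.cast_sub (aux_q1 (F := F))]
    ring
  rw [← h1]
  exact_mod_cast u

lemma aux_NR_lower :
    (Fintype.card F : ℝ)^3 - (Fintype.card F : ℝ)^2 ≤ (Fintype.card SL2 : ℝ) := by
  have h := aux_card_sum (F := F)
  have h2 : (Fintype.card SL2 : ℝ) = ∑ t : F, ((tfib t).card : ℝ) := by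
    rw [h]; push_cast; ring
  rw [h2]
  calc (Fintype.card F : ℝ)^3 - (Fintype.card F : ℝ)^2
      = ∑ _t : F, ((Fintype.card F : ℝ) * (Fintype.card F : ℝ) - (Fintype.card F : ℝ)) := by
        rw [Finset.sum_const, Finset.card_univ, nsmul_eq_mul]
        ring
    _ ≤ ∑ t : F, ((tfib t).card : ℝ) :=
        Finset.sum_le_sum (fun t _ => aux_tfib_real_lower t)

lemma aux_NR_upper :
    (Fintype.card SL2 : ℝ) ≤ (Fintype.card F : ℝ)^3 + (Fintype.card F : ℝ)^2 := by
  have h := aux_card_sum (F := F)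
  have h2 : (Fintype.card SL2 : ℝ) = ∑ t : F, ((tfib t).card : ℝ) := by
    rw [h]; push_cast; ring
  rw [h2]
  calc ∑ t : F, ((tfib t).card : ℝ)
      ≤ ∑ _t : F, ((Fintype.card F : ℝ) * (Fintype.card F : ℝ) + (Fintype.card F : ℝ)) :=
        Finset.sum_le_sum (fun t _ => aux_tfib_real_upper t)
    _ = (Fintype.card F : ℝ)^3 + (Fintype.card F : ℝ)^2 := by
        rw [Finset.sum_const, Finset.card_univ, nsmul_eq_mul]
        ring

lemma aux_Ntr (t : F) :
    |(∑ _g ∈ tfib t, 1/(Fintype.card SL2 : ℝ)) - 1/(Fintype.card F : ℝ)|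
      ≤ 4/((Fintype.card F : ℝ)*(Fintype.card F : ℝ)) := by
  have hq2 : 2 ≤ Fintype.card F := Fintype.one_lt_card
  have hQ2 : (2:ℝ) ≤ (Fintype.card F : ℝ) := by exact_mod_cast hq2
  set Q : ℝ := (Fintype.card F : ℝ) with hQ
  set NR : ℝ := (Fintype.card SL2 : ℝ) with hNR
  have hQ0 : (0:ℝ) < Q := by linarith
  have hNRl : Q^3 - Q^2 ≤ NR := aux_NR_lower
  have hNRu : NR ≤ Q^3 + Q^2 := aux_NR_upper
  have hNRhalf : Q^3/2 ≤ NR := by nlinarith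
  have hNR0 : (0:ℝ) < NR := by nlinarith
  set ft : ℝ := ((tfib t).card : ℝ) with hft
  have hftl : Q*Q - Q ≤ ft := aux_tfib_real_lower t
  have hftu : ft ≤ Q*Q + Q := aux_tfib_real_upper t
  have hsumconst : (∑ _g ∈ tfib t, 1/NR) = ft/NR := by
    rw [Finset.sum_const, nsmul_eq_mul, hft]
    ring
  rw [hsumconst]
  have key : ft/NR - 1/Q = (ft*Q - NR)/(NR*Q) := by
    field_simp
  rw [key, abs_div, abs_of_pos (by positivity : (0:ℝ) < NR*Q)]
  have h1 : |ft*Q - NR| ≤ 2*Q^2 := by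
    rw [abs_le]
    constructor <;> nlinarith
  calc |ft*Q - NR|/(NR*Q) ≤ (2*Q^2)/(Q^4/2) := by
        apply div_le_div₀ (by positivity) h1 (by positivity)
        nlinarith
    _ = 4/(Q*Q) := by
        field_simp
        ring

lemma aux_Dtr_single (D : SL2 → ℝ) (hD0 : ∀ x, 0 ≤ D x) (ε : ℝ)
    (hε : ∑ x : F, |(∑ g ∈ tfib x, D g) - 1/(Fintype.card F : ℝ)| ≤ 2*ε) (t : F) :
    ∑ g ∈ tfib t, D g ≤ 1/(Fintype.card F : ℝ) + 2*ε := by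
  have h1 : |(∑ g ∈ tfib t, D g) - 1/(Fintype.card F : ℝ)| ≤ 2*ε := by
    refine le_trans ?_ hε
    exact Finset.single_le_sum (f := fun x : F => |(∑ g ∈ tfib x, D g) - 1/(Fintype.card F : ℝ)|)
      (fun x _ => abs_nonneg _) (Finset.mem_univ t)
  have h2 := le_abs_self ((∑ g ∈ tfib t, D g) - 1/(Fintype.card F : ℝ))
  linarith

lemma aux_main (D : SL2 → ℝ) (hD0 : ∀ x, 0 ≤ D x) (ε : ℝ) (hε0 : 0 ≤ ε)
    (hε : ∑ x : F, |(∑ g ∈ tfib x, D g) - 1/(Fintype.card F : ℝ)| ≤ 2*ε) :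
    ∑ S ∈ Finset.image (fun g : SL2 => cls g) Finset.univ,
      |(∑ g ∈ clsfib S, D g) - ∑ _g ∈ clsfib S, 1/(Fintype.card SL2 : ℝ)|
      ≤ 6*ε + 14/(Fintype.card F : ℝ) := by
  have hq2 : 2 ≤ Fintype.card F := Fintype.one_lt_card
  have hQ2 : (2:ℝ) ≤ (Fintype.card F : ℝ) := by exact_mod_cast hq2
  set Q : ℝ := (Fintype.card F : ℝ) with hQ
  set NR : ℝ := (Fintype.card SL2 : ℝ) with hNR
  have hQ0 : (0:ℝ) < Q := by linarith
  have hNRl : Q^3 - Q^2 ≤ NR := aux_NR_lower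
  have hNRu : NR ≤ Q^3 + Q^2 := aux_NR_upper
  have hNRhalf : Q^3/2 ≤ NR := by nlinarith
  have hNR0 : (0:ℝ) < NR := by nlinarith
  set Good : Finset SL2 := Finset.univ.filter
    (fun g : SL2 => Matrix.trace (g : Matrix (Fin 2) (Fin 2) F)
      * Matrix.trace (g : Matrix (Fin 2) (Fin 2) F) - 4 ≠ 0) with hGood
  set Bad : Finset SL2 := Finset.univ.filter
    (fun g : SL2 => ¬ (Matrix.trace (g : Matrix (Fin 2) (Fin 2) F)
      * Matrix.trace (g : Matrix (Fin 2) (Fin 2) F) - 4 ≠ 0)) with hBad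
  set f : Finset SL2 → ℝ := fun S =>
    |(∑ g ∈ clsfib S, D g) - ∑ _g ∈ clsfib S, 1/NR| with hf
  show ∑ S ∈ Finset.image (fun g : SL2 => cls g) Finset.univ, f S ≤ 6*ε + 14/Q
  have himg : Finset.image (fun g : SL2 => cls g) Finset.univ
      = (Good.image (fun g : SL2 => cls g)) ∪ (Bad.image (fun g : SL2 => cls g)) := by
    rw [← Finset.image_union, hGood, hBad, Finset.filter_union_filter_not_eq]
  have htraceq : ∀ g h : SL2, cls g = cls h →
      Matrix.trace (g : Matrix (Fin 2) (Fin 2) F)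
        = Matrix.trace (h : Matrix (Fin 2) (Fin 2) F) := by
    intro g h hgh
    have : g ∈ cls h := hgh ▸ aux_mem_cls_self g
    exact aux_trace_of_mem_cls this
  have hdisj : Disjoint (Good.image (fun g : SL2 => cls g))
      (Bad.image (fun g : SL2 => cls g)) := by
    rw [Finset.disjoint_left]
    rintro S hSg hSb
    obtain ⟨g, hg, rfl⟩ := Finset.mem_image.mp hSg
    obtain ⟨h, hh, hch⟩ := Finset.mem_image.mp hSb
    rw [hGood] at hg
    rw [hBad] at hh
    simp only [Finset.mem_filter, Finset.mem_univ, true_and] at hg hh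
    exact hh (htraceq h g hch ▸ hg)
  rw [himg, Finset.sum_union hdisj]
  -- GOOD part
  have hgoodcls : ∀ g ∈ Good, cls g
      = tfib (Matrix.trace (g : Matrix (Fin 2) (Fin 2) F)) := by
    intro g hg
    rw [hGood] at hg
    simp only [Finset.mem_filter, Finset.mem_univ, true_and] at hg
    exact aux_cls_eq_tfiber hg g rfl
  have hgood_img : Good.image (fun g : SL2 => cls g)
      = (Good.image (fun g : SL2 => Matrix.trace (g : Matrix (Fin 2) (Fin 2) F))).image
          (fun t : F => tfib t) := by
    rw [Finset.image_image]
    apply Finset.image_congr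
    intro g hg
    exact hgoodcls g hg
  have htfib_ne : ∀ t : F, (tfib t).Nonempty := by
    intro t
    rw [← Finset.card_pos]
    have := aux_fiber_lower (F := F) t
    have h2 : 1 ≤ Fintype.card F * (Fintype.card F - 1) := by
      have := hq2
      calc 1 = 1 * 1 := by ring
        _ ≤ Fintype.card F * (Fintype.card F - 1) :=
          Nat.mul_le_mul (by omega) (by omega)
    simp only [tfib]
    omega
  have hinj : ∀ x ∈ Good.image (fun g : SL2 => Matrix.trace (g : Matrix (Fin 2) (Fin 2) F)),
      ∀ y ∈ Good.image (fun g : SL2 => Matrix.trace (g : Matrix (Fin 2) (Fin 2) F)),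
      tfib x = tfib y → x = y := by
    intro x _ y _ hxy
    obtain ⟨g, hg⟩ := htfib_ne x
    have hgx : Matrix.trace (g : Matrix (Fin 2) (Fin 2) F) = x := by
      simpa [tfib] using hg
    have hgy : Matrix.trace (g : Matrix (Fin 2) (Fin 2) F) = y := by
      rw [hxy] at hg
      simpa [tfib] using hg
    rw [← hgx, hgy]
  have hclsfib_tfib : ∀ t ∈ Good.image
      (fun g : SL2 => Matrix.trace (g : Matrix (Fin 2) (Fin 2) F)),
      clsfib (tfib t) = tfib t := by
    intro t ht
    obtain ⟨g0, hg0, hg0t⟩ := Finset.mem_image.mp ht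
    have hgood : t*t - 4 ≠ 0 := by
      rw [hGood] at hg0
      simp only [Finset.mem_filter, Finset.mem_univ, true_and] at hg0
      rw [← hg0t]
      exact hg0
    ext h
    simp only [clsfib, Finset.mem_filter, Finset.mem_univ, true_and]
    constructor
    · intro hch
      have := aux_mem_cls_self h
      rw [hch] at this
      exact this
    · intro hh
      have htr : Matrix.trace (h : Matrix (Fin 2) (Fin 2) F) = t := by
        simpa [tfib] using hh
      exact aux_cls_eq_tfiber hgood h htr
  have hgoodsum : ∑ S ∈ Good.image (fun g : SL2 => cls g), f S ≤ 2*ε + 4/Q := by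
    rw [hgood_img, Finset.sum_image hinj]
    have hstep : ∀ t ∈ Good.image
        (fun g : SL2 => Matrix.trace (g : Matrix (Fin 2) (Fin 2) F)),
        f (tfib t) = |(∑ g ∈ tfib t, D g) - ∑ _g ∈ tfib t, 1/NR| := by
      intro t ht
      rw [hf]
      simp only
      rw [hclsfib_tfib t ht]
    rw [Finset.sum_congr rfl hstep]
    calc ∑ t ∈ Good.image (fun g : SL2 => Matrix.trace (g : Matrix (Fin 2) (Fin 2) F)),
          |(∑ g ∈ tfib t, D g) - ∑ _g ∈ tfib t, 1/NR|
        ≤ ∑ t : F, |(∑ g ∈ tfib t, D g) - ∑ _g ∈ tfib t, 1/NR| :=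
          Finset.sum_le_sum_of_subset_of_nonneg (Finset.subset_univ _)
            (fun _ _ _ => abs_nonneg _)
      _ ≤ ∑ t : F, (|(∑ g ∈ tfib t, D g) - 1/Q| + |(∑ _g ∈ tfib t, 1/NR) - 1/Q|) := by
          apply Finset.sum_le_sum
          intro t _
          have h1 := abs_sub_le ((∑ g ∈ tfib t, D g)) (1/Q) (∑ _g ∈ tfib t, 1/NR)
          have h2 : |1/Q - ∑ _g ∈ tfib t, 1/NR| = |(∑ _g ∈ tfib t, 1/NR) - 1/Q| :=
            abs_sub_comm _ _
          linarith
      _ = (∑ t : F, |(∑ g ∈ tfib t, D g) - 1/Q|)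
          + ∑ t : F, |(∑ _g ∈ tfib t, 1/NR) - 1/Q| := Finset.sum_add_distrib
      _ ≤ 2*ε + 4/Q := by
          have h3 : ∑ t : F, |(∑ _g ∈ tfib t, 1/NR) - 1/Q| ≤ 4/Q := by
            calc ∑ t : F, |(∑ _g ∈ tfib t, 1/NR) - 1/Q|
                ≤ ∑ _t : F, 4/(Q*Q) := Finset.sum_le_sum (fun t _ => aux_Ntr t)
              _ = Q * (4/(Q*Q)) := by
                  rw [Finset.sum_const, Finset.card_univ, nsmul_eq_mul, hQ]
              _ = 4/Q := by field_simp
          linarith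
  -- BAD part
  have hbadsum : ∑ S ∈ Bad.image (fun g : SL2 => cls g), f S ≤ 4*ε + 10/Q := by
    have hstep1 : ∑ S ∈ Bad.image (fun g : SL2 => cls g), f S
        ≤ ∑ S ∈ Bad.image (fun g : SL2 => cls g), ∑ g ∈ clsfib S, (D g + 1/NR) := by
      apply Finset.sum_le_sum
      intro S _
      rw [hf]
      simp only
      rw [Finset.sum_add_distrib]
      exact aux_abs_sub_le_add (Finset.sum_nonneg (fun g _ => hD0 g))
        (Finset.sum_nonneg (fun g _ => by positivity))
    have hstep2 : ∑ S ∈ Bad.image (fun g : SL2 => cls g), ∑ g ∈ clsfib S, (D g + 1/NR)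
        = ∑ g ∈ Finset.univ.filter
            (fun g : SL2 => cls g ∈ Bad.image (fun g : SL2 => cls g)), (D g + 1/NR) := by
      exact Finset.sum_fiberwise_eq_sum_filter Finset.univ
        (Bad.image (fun g : SL2 => cls g)) (fun g : SL2 => cls g) (fun g => D g + 1/NR)
    have hsubset : Finset.univ.filter
        (fun g : SL2 => cls g ∈ Bad.image (fun g : SL2 => cls g))
        ⊆ tfib 2 ∪ tfib (-2) := by
      intro g hg
      simp only [Finset.mem_filter, Finset.mem_univ, true_and] at hg
      obtain ⟨h, hh, hch⟩ := Finset.mem_image.mp hg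
      rw [hBad] at hh
      simp only [Finset.mem_filter, Finset.mem_univ, true_and, not_not] at hh
      have htr := htraceq g h hch.symm
      have h4 : Matrix.trace (g : Matrix (Fin 2) (Fin 2) F)
          * Matrix.trace (g : Matrix (Fin 2) (Fin 2) F) - 4 = 0 := by
        rw [htr]; exact hh
      have h5 : (Matrix.trace (g : Matrix (Fin 2) (Fin 2) F) - 2)
          * (Matrix.trace (g : Matrix (Fin 2) (Fin 2) F) + 2) = 0 := by
        linear_combination h4
      rw [Finset.mem_union]
      rcases mul_eq_zero.mp h5 with h6 | h6
      · left
        simp only [tfib, Finset.mem_filter, Finset.mem_univ, true_and]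
        linear_combination h6
      · right
        simp only [tfib, Finset.mem_filter, Finset.mem_univ, true_and]
        linear_combination h6
    have hstep3 : ∑ g ∈ Finset.univ.filter
          (fun g : SL2 => cls g ∈ Bad.image (fun g : SL2 => cls g)), (D g + 1/NR)
        ≤ ∑ g ∈ tfib 2 ∪ tfib (-2), (D g + 1/NR) :=
      Finset.sum_le_sum_of_subset_of_nonneg hsubset
        (fun g _ _ => by have := hD0 g; positivity)
    have hstep4 : ∑ g ∈ tfib 2 ∪ tfib (-2), (D g + 1/NR)
        ≤ (∑ g ∈ tfib (2:F), (D g + 1/NR)) + ∑ g ∈ tfib (-2:F), (D g + 1/NR) := by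
      have := Finset.sum_union_inter (s₁ := tfib (2:F)) (s₂ := tfib (-2:F))
        (f := fun g : SL2 => D g + 1/NR)
      have hnn : 0 ≤ ∑ g ∈ tfib (2:F) ∩ tfib (-2:F), (D g + 1/NR) :=
        Finset.sum_nonneg (fun g _ => by have := hD0 g; positivity)
      linarith
    have hfibsum : ∀ t : F, ∑ g ∈ tfib t, (D g + 1/NR) ≤ 2*ε + 1/Q + 4/Q := by
      intro t
      rw [Finset.sum_add_distrib]
      have h1 : ∑ g ∈ tfib t, D g ≤ 1/Q + 2*ε := aux_Dtr_single D hD0 ε hε t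
      have h2 : (∑ _g ∈ tfib t, 1/NR) ≤ 4/Q := by
        rw [Finset.sum_const, nsmul_eq_mul]
        have hftu : ((tfib t).card : ℝ) ≤ Q*Q + Q := aux_tfib_real_upper t
        calc ((tfib t).card : ℝ) * (1/NR) = ((tfib t).card : ℝ)/NR := by ring
          _ ≤ (2*Q^2)/(Q^3/2) := by
              apply div_le_div₀ (by positivity) (by nlinarith) (by positivity) hNRhalf
          _ = 4/Q := by field_simp; ring
      linarith
    calc ∑ S ∈ Bad.image (fun g : SL2 => cls g), f S
        ≤ ∑ g ∈ tfib 2 ∪ tfib (-2), (D g + 1/NR) := by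
          rw [hstep2] at hstep1
          linarith
      _ ≤ (∑ g ∈ tfib (2:F), (D g + 1/NR)) + ∑ g ∈ tfib (-2:F), (D g + 1/NR) := hstep4
      _ ≤ (2*ε + 1/Q + 4/Q) + (2*ε + 1/Q + 4/Q) := add_le_add (hfibsum 2) (hfibsum (-2))
      _ = 4*ε + 10/Q := by ring
  calc ∑ S ∈ Finset.image (fun g : SL2 => cls g) Good, f S
        + ∑ S ∈ Finset.image (fun g : SL2 => cls g) Bad, f S
      ≤ (2*ε + 4/Q) + (4*ε + 10/Q) := add_le_add hgoodsum hbadsum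
    _ = 6*ε + 14/Q := by ring


open scoped Classical in
theorem stmt13 :
    ∃ c C : ℝ, 0 < c ∧ 0 < C ∧
      ∀ (F : Type) [Field F] [Fintype F] [DecidableEq F],
        ∀ D : SpecialLinearGroup (Fin 2) F → ℝ,
          (∀ x, 0 ≤ D x) → (∑ x, D x) = 1 →
          ∀ ε : ℝ,
          -- the trace of a sample from D is ε-close to uniform on F_q
          ((1 : ℝ) / 2) * (∑ x : F,
              |(∑ g ∈ Finset.univ.filter
                  (fun g : SpecialLinearGroup (Fin 2) F =>
                    Matrix.trace (g : Matrix (Fin 2) (Fin 2) F) = x), D g) -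
                1 / (Fintype.card F : ℝ)|) ≤ ε →
          -- then the conjugacy class of a sample from D is (Cε + C/q)-close to
          -- the conjugacy class of a uniform sample
          ((1 : ℝ) / 2) * (∑ S ∈ Finset.univ.image
              (fun g : SpecialLinearGroup (Fin 2) F =>
                Finset.univ.image (fun u : SpecialLinearGroup (Fin 2) F => u⁻¹ * g * u)),
              |(∑ g ∈ Finset.univ.filter
                  (fun g : SpecialLinearGroup (Fin 2) F =>
                    Finset.univ.image
                      (fun u : SpecialLinearGroup (Fin 2) F => u⁻¹ * g * u) = S), D g) -
                (∑ g ∈ Finset.univ.filter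
                  (fun g : SpecialLinearGroup (Fin 2) F =>
                    Finset.univ.image
                      (fun u : SpecialLinearGroup (Fin 2) F => u⁻¹ * g * u) = S),
                  1 / (Fintype.card (SpecialLinearGroup (Fin 2) F) : ℝ))|) ≤
            C * ε + C / (Fintype.card F : ℝ) := by
  refine ⟨1, 7, one_pos, by norm_num, ?_⟩
  intro F _ _ _ D hD0 hD1 ε hε
  classical
  have hcls : ∀ g : Matrix.SpecialLinearGroup (Fin 2) F,
      Finset.univ.image (fun u : Matrix.SpecialLinearGroup (Fin 2) F => u⁻¹ * g * u) = cls g :=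
    fun g => by unfold cls; congr
  simp only [hcls]
  have hε0 : 0 ≤ ε := le_trans (by positivity) hε
  have hε2 : ∑ x : F, |(∑ g ∈ tfib x, D g) - 1/(Fintype.card F : ℝ)| ≤ 2*ε := by
    have h' : (1:ℝ)/2 * (∑ x : F, |(∑ g ∈ tfib x, D g) - 1/(Fintype.card F : ℝ)|) ≤ ε := hε
    linarith
  have hmain := aux_main D hD0 ε hε0 hε2
  have hQ0 : (0:ℝ) < (Fintype.card F : ℝ) := by
    have : 0 < Fintype.card F := Fintype.card_pos
    exact_mod_cast this
  have hQinv : 0 ≤ 1/(Fintype.card F : ℝ) := by positivity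
  show (1:ℝ)/2 * (∑ S ∈ Finset.image
      (fun g : Matrix.SpecialLinearGroup (Fin 2) F => cls g) Finset.univ,
      |(∑ g ∈ clsfib S, D g) - ∑ _g ∈ clsfib S,
          1/(Fintype.card (Matrix.SpecialLinearGroup (Fin 2) F) : ℝ)|)
    ≤ 7*ε + 7/(Fintype.card F : ℝ)
  calc (1:ℝ)/2 * (∑ S ∈ Finset.image
      (fun g : Matrix.SpecialLinearGroup (Fin 2) F => cls g) Finset.univ,
      |(∑ g ∈ clsfib S, D g) - ∑ _g ∈ clsfib S,
          1/(Fintype.card (Matrix.SpecialLinearGroup (Fin 2) F) : ℝ)|)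
      ≤ (1:ℝ)/2 * (6*ε + 14/(Fintype.card F : ℝ)) :=
        mul_le_mul_of_nonneg_left hmain (by norm_num)
    _ ≤ 7*ε + 7/(Fintype.card F : ℝ) := by
        have h7 : (1:ℝ)/2 * (6*ε + 14/(Fintype.card F : ℝ))
            = 3*ε + 7/(Fintype.card F : ℝ) := by ring
        linarith
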